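/- Let β ∈ W^{2,p}(S¹) for some p > 2, and define γ(t) = -β(t)²/2, ζ(t) = (1/2)∫₀ᵗ (β(s)² - β'(s)²) ds, u_β(x) = |x|γ(x/|x|)·(x/|x|) + |x|ζ(x/|x|)·(x/|x|)^⊥ (where (x₁,x₂)^⊥ = (-x₂,x₁)), and v_β(x) = |x|β(x/|x|). Assume ∫_{S¹}(β² - β'²) dt = 0. Then sym Du_β + (1/2) Dv_β ⊗ Dv_β = 0 almost everywhere on ℝ² \ {0}, i.e., the pair (u_β, v_β) is an isometric immersion in the von Kármán sense. -/

import Mathlib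

open MeasureTheory Real Set
noncomputable section

/-- Euclidean norm on `ℝ × ℝ`. -/
def n2 (x : ℝ × ℝ) : ℝ := Real.sqrt (x.1 ^ 2 + x.2 ^ 2)

/-- The open unit disk. -/
def B1 : Set (ℝ × ℝ) := {x | n2 x < 1}

/-- Partial derivative in direction `i`. -/
def pd (i : Fin 2) (f : ℝ × ℝ → ℝ) (x : ℝ × ℝ) : ℝ :=
  fderiv ℝ f x (if i = 0 then (1, 0) else (0, 1))

/-- Entries of the Hessian. -/
def hess (f : ℝ × ℝ → ℝ) (i j : Fin 2) (x : ℝ × ℝ) : ℝ := pd i (pd j f) x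

/-- Hessian determinant (the linearized Gauss curvature). -/
def detHess (f : ℝ × ℝ → ℝ) (x : ℝ × ℝ) : ℝ :=
  hess f 0 0 x * hess f 1 1 x - hess f 0 1 x * hess f 1 0 x

/-- Squared Frobenius norm of the Hessian. -/
def hnormSq (f : ℝ × ℝ → ℝ) (x : ℝ × ℝ) : ℝ := ∑ i : Fin 2, ∑ j : Fin 2, (hess f i j x) ^ 2

/-- Components of an `ℝ²`-valued map. -/
def uc (i : Fin 2) (u : ℝ × ℝ → ℝ × ℝ) : ℝ × ℝ → ℝ :=
  fun x => if i = 0 then (u x).1 else (u x).2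

/-- Entries of the membrane strain `sym Du + ½ Dv ⊗ Dv`. -/
def memb (u : ℝ × ℝ → ℝ × ℝ) (v : ℝ × ℝ → ℝ) (i j : Fin 2) (x : ℝ × ℝ) : ℝ :=
  (pd i (uc j u) x + pd j (uc i u) x) / 2 + (pd i v x * pd j v x) / 2

/-- Squared Frobenius norm of the membrane strain. -/
def membSq (u : ℝ × ℝ → ℝ × ℝ) (v : ℝ × ℝ → ℝ) (x : ℝ × ℝ) : ℝ :=
  ∑ i : Fin 2, ∑ j : Fin 2, (memb u v i j x) ^ 2

/-- Unit tangent to the circle. -/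
def eT (t : ℝ) : ℝ × ℝ := (Real.cos t, Real.sin t)

/-- Rotated unit vector. -/
def eTperp (t : ℝ) : ℝ × ℝ := (-Real.sin t, Real.cos t)

/-- Angle of a point of the plane. -/
def ang (x : ℝ × ℝ) : ℝ := Complex.arg ⟨x.1, x.2⟩

/-- The conical out-of-plane displacement `v_β(x) = |x| β(x̂)`. -/
def vbeta (β : ℝ → ℝ) (x : ℝ × ℝ) : ℝ := n2 x * β (ang x)

/-- `ζ(t) = ½∫₀ᵗ (β² - β'²)`. -/
def zbeta (β : ℝ → ℝ) (t : ℝ) : ℝ := (1 / 2) * ∫ s in (0:ℝ)..t, (β s ^ 2 - (deriv β s) ^ 2)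

/-- The conical in-plane displacement `u_β`. -/
def ubeta (β : ℝ → ℝ) (x : ℝ × ℝ) : ℝ × ℝ :=
  (n2 x * (-(β (ang x)) ^ 2 / 2)) • eT (ang x) + (n2 x * zbeta β (ang x)) • eTperp (ang x)

/-- `β ∈ W^{2,p}(S¹)`: a `2π`-periodic `C¹` function whose derivative is (a.e.)
differentiable with second derivative in `L^p`. -/
def MemW2p (p : ℝ) (β : ℝ → ℝ) : Prop :=
  Function.Periodic β (2 * π) ∧ ContDiff ℝ 1 β ∧
    (∀ᵐ t : ℝ, DifferentiableAt ℝ (deriv β) t) ∧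
    MemLp (deriv (deriv β)) (ENNReal.ofReal p) (volume.restrict (Set.Ioc (0:ℝ) (2 * π)))


lemma n2_pos {x : ℝ × ℝ} (hx : x.2 ≠ 0) : 0 < n2 x := by
  apply Real.sqrt_pos.mpr; positivity

lemma abs_eq_n2 (x : ℝ × ℝ) : ‖(⟨x.1, x.2⟩ : ℂ)‖ = n2 x := by
  rw [Complex.norm_def, Complex.normSq_apply, n2]
  congr 1; ring

lemma n2_fderiv {x : ℝ × ℝ} (hx : x.2 ≠ 0) :
    ∃ L : ℝ × ℝ →L[ℝ] ℝ, HasFDerivAt n2 L x ∧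
      L (1, 0) = x.1 / n2 x ∧ L (0, 1) = x.2 / n2 x := by
  have h1 : HasFDerivAt (fun y : ℝ × ℝ => y.1) (ContinuousLinearMap.fst ℝ ℝ ℝ) x :=
    hasFDerivAt_fst
  have h2 : HasFDerivAt (fun y : ℝ × ℝ => y.2) (ContinuousLinearMap.snd ℝ ℝ ℝ) x :=
    hasFDerivAt_snd
  have hq := (h1.mul h1).add (h2.mul h2)
  have hq0 : x.1 * x.1 + x.2 * x.2 ≠ 0 := ne_of_gt (by nlinarith [mul_self_pos.mpr hx, mul_self_nonneg x.1])
  have hs := (Real.hasDerivAt_sqrt hq0).comp_hasFDerivAt x hq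
  have hn2 : n2 = fun y : ℝ × ℝ => Real.sqrt (y.1 * y.1 + y.2 * y.2) := by
    funext y; rw [n2]; congr 1; ring
  rw [hn2]
  have hr : Real.sqrt (x.1 * x.1 + x.2 * x.2) = n2 x := by rw [n2]; congr 1; ring
  have hrpos : 0 < n2 x := n2_pos hx
  refine ⟨_, hs, ?_, ?_⟩ <;>
  · simp [ContinuousLinearMap.smul_apply, hr]
    field_simp
    ring

lemma ang_fderiv {x : ℝ × ℝ} (hx : x.2 ≠ 0) :
    ∃ L : ℝ × ℝ →L[ℝ] ℝ, HasFDerivAt ang L x ∧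
      L (1, 0) = -x.2 / n2 x ^ 2 ∧ L (0, 1) = x.1 / n2 x ^ 2 := by
  set z : ℂ := ⟨x.1, x.2⟩ with hz
  have hzs : z ∈ Complex.slitPlane := Complex.mem_slitPlane_iff.mpr (Or.inr hx)
  have hz0 : z ≠ 0 := Complex.slitPlane_ne_zero hzs
  have hlog : HasDerivAt Complex.log z⁻¹ z := Complex.hasDerivAt_log hzs
  have hlogF : HasFDerivAt Complex.log
      ((ContinuousLinearMap.smulRight (1 : ℂ →L[ℂ] ℂ) z⁻¹).restrictScalars ℝ) z :=
    (hlog.hasFDerivAt).restrictScalars ℝ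
  have he : HasFDerivAt (fun y : ℝ × ℝ => (⟨y.1, y.2⟩ : ℂ))
      (Complex.equivRealProdCLM.symm : ℝ × ℝ →L[ℝ] ℂ) x := by
    have h := Complex.equivRealProdCLM.symm.hasFDerivAt (x := x)
    have : (fun y : ℝ × ℝ => (⟨y.1, y.2⟩ : ℂ)) = ⇑Complex.equivRealProdCLM.symm := by
      funext y
      rw [Complex.equivRealProdCLM_symm_apply, Complex.mk_eq_add_mul_I]
    rw [this]; exact h
  have hcomp := hlogF.comp x he
  have him := (Complex.imCLM.hasFDerivAt (x := Complex.log z)).comp x hcomp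
  have hang : ang = fun y : ℝ × ℝ => Complex.im (Complex.log ⟨y.1, y.2⟩) := by
    funext y; rw [ang, Complex.log_im]
  rw [hang]
  have hnormSq : Complex.normSq z = n2 x ^ 2 := by
    rw [Complex.normSq_apply, ← abs_eq_n2, Complex.sq_norm, Complex.normSq_apply]
  refine ⟨_, him, ?_, ?_⟩ <;>
  · simp [ContinuousLinearMap.comp_apply, Complex.equivRealProdCLM_symm_apply,
      Complex.inv_im, Complex.inv_re, hnormSq]
    rfl

lemma cos_ang {x : ℝ × ℝ} (hx : x.2 ≠ 0) : Real.cos (ang x) = x.1 / n2 x := by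
  have hz0 : (⟨x.1, x.2⟩ : ℂ) ≠ 0 := by
    simp [Complex.ext_iff, hx]
  rw [ang, Complex.cos_arg hz0, abs_eq_n2]

lemma sin_ang (x : ℝ × ℝ) : Real.sin (ang x) = x.2 / n2 x := by
  rw [ang, Complex.sin_arg, abs_eq_n2]

lemma pd_radial {F : ℝ → ℝ} {F' : ℝ} {x : ℝ × ℝ} (hx : x.2 ≠ 0)
    (hF : HasDerivAt F F' (ang x)) (i : Fin 2) :
    pd i (fun y => n2 y * F (ang y)) x =
      if i = 0 then F (ang x) * Real.cos (ang x) - F' * Real.sin (ang x)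
      else F (ang x) * Real.sin (ang x) + F' * Real.cos (ang x) := by
  obtain ⟨Ln, hn, hn1, hn2⟩ := n2_fderiv hx
  obtain ⟨La, ha, ha1, ha2⟩ := ang_fderiv hx
  have hcomp : HasFDerivAt (fun y => F (ang y)) (F' • La) x := hF.comp_hasFDerivAt x ha
  have hmul : HasFDerivAt (fun y => n2 y * F (ang y)) (n2 x • F' • La + F (ang x) • Ln) x := hn.mul hcomp
  have hr : (0:ℝ) < n2 x := n2_pos hx
  rw [pd, hmul.fderiv]
  fin_cases i
  · norm_num [ContinuousLinearMap.add_apply, ContinuousLinearMap.smul_apply,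
      cos_ang hx, sin_ang]
    rw [hn1, ha1]
    field_simp
    ring
  · norm_num [ContinuousLinearMap.add_apply, ContinuousLinearMap.smul_apply,
      cos_ang hx, sin_ang]
    rw [hn2, ha2]
    field_simp
    ring

/-- the conical displacements `(u_β, v_β)` form a von Kármán
isometric immersion: `sym Du_β + ½ Dv_β ⊗ Dv_β = 0` a.e. on `ℝ² \ {0}`. -/
theorem vonKarman_isometry_of_cone (p : ℝ) (hp : 2 < p) (β : ℝ → ℝ)
    (hβ : MemW2p p β)
    (hzero : ∫ t in (0:ℝ)..(2 * π), (β t ^ 2 - (deriv β t) ^ 2) = 0) :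
    ∀ᵐ x : ℝ × ℝ, x ≠ 0 → ∀ i j : Fin 2, memb (ubeta β) (vbeta β) i j x = 0 := by
  have hC1 : ContDiff ℝ 1 β := hβ.2.1

  have hβd : Differentiable ℝ β := hC1.differentiable one_ne_zero
  have hβ'c : Continuous (deriv β) := hC1.continuous_deriv le_rfl
  have hcont : Continuous (fun s => β s ^ 2 - deriv β s ^ 2) :=
    (hβd.continuous.pow 2).sub (hβ'c.pow 2)
  have hnull : volume {x : ℝ × ℝ | x.2 = 0} = 0 := by
    have hset : {x : ℝ × ℝ | x.2 = 0} = (Set.univ : Set ℝ) ×ˢ ({0} : Set ℝ) := by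
      ext ⟨a, b⟩; simp [Set.mem_prod, eq_comm]
    rw [hset, Measure.volume_eq_prod, Measure.prod_prod]
    simp
  have hae2 : ∀ᵐ x : ℝ × ℝ, x.2 ≠ 0 := by
    rw [MeasureTheory.ae_iff]
    simpa using hnull
  filter_upwards [hae2] with x hx _ i j
  set t := ang x with ht
  have hb : HasDerivAt β (deriv β t) t := (hβd t).hasDerivAt
  have hzder : HasDerivAt (zbeta β) ((1/2) * (β t ^ 2 - deriv β t ^ 2)) t := by
    have h := intervalIntegral.integral_hasDerivAt_right
      (hcont.intervalIntegrable 0 t)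
      (hcont.stronglyMeasurableAtFilter volume (nhds t))
      hcont.continuousAt
    exact h.const_mul (1/2)
  have hγ : HasDerivAt (fun s => -β s ^ 2 / 2) (-(2 * β t ^ 1 * deriv β t) / 2) t :=
    ((hb.pow 2).neg).div_const 2
  have hcos := Real.hasDerivAt_cos t
  have hsin := Real.hasDerivAt_sin t
  -- F0 and its derivative
  have hF0 : HasDerivAt (fun s => -β s ^ 2 / 2 * Real.cos s - zbeta β s * Real.sin s)
      (-(β t * deriv β t) * Real.cos t + β t ^ 2 / 2 * Real.sin t
        - (β t ^ 2 - deriv β t ^ 2) / 2 * Real.sin t - zbeta β t * Real.cos t) t := by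
    have h : HasDerivAt (fun s => -β s ^ 2 / 2 * Real.cos s - zbeta β s * Real.sin s) _ t :=
      (hγ.mul hcos).sub (hzder.mul hsin)
    convert h using 1
    ring
  have hF1 : HasDerivAt (fun s => -β s ^ 2 / 2 * Real.sin s + zbeta β s * Real.cos s)
      (-(β t * deriv β t) * Real.sin t - β t ^ 2 / 2 * Real.cos t
        + (β t ^ 2 - deriv β t ^ 2) / 2 * Real.cos t - zbeta β t * Real.sin t) t := by
    have h : HasDerivAt (fun s => -β s ^ 2 / 2 * Real.sin s + zbeta β s * Real.cos s) _ t :=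
      (hγ.mul hsin).add (hzder.mul hcos)
    convert h using 1
    ring
  have hu0 : uc 0 (ubeta β) =
      fun y => n2 y * (-β (ang y) ^ 2 / 2 * Real.cos (ang y) - zbeta β (ang y) * Real.sin (ang y)) := by
    funext y
    simp [uc, ubeta, eT, eTperp, Prod.smul_mk, Prod.mk_add_mk, smul_eq_mul]
    ring
  have hu1 : uc 1 (ubeta β) =
      fun y => n2 y * (-β (ang y) ^ 2 / 2 * Real.sin (ang y) + zbeta β (ang y) * Real.cos (ang y)) := by
    funext y
    simp [uc, ubeta, eT, eTperp, Prod.smul_mk, Prod.mk_add_mk, smul_eq_mul]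
    ring
  have hv : vbeta β = fun y => n2 y * β (ang y) := rfl
  have qv0 : pd 0 (vbeta β) x = β t * Real.cos t - deriv β t * Real.sin t := by
    rw [hv]; simpa using pd_radial hx hb 0
  have qv1 : pd 1 (vbeta β) x = β t * Real.sin t + deriv β t * Real.cos t := by
    rw [hv]; simpa using pd_radial hx hb 1
  have q00 : pd 0 (uc 0 (ubeta β)) x =
      (-β t ^ 2 / 2 * Real.cos t - zbeta β t * Real.sin t) * Real.cos t
        - (-(β t * deriv β t) * Real.cos t + β t ^ 2 / 2 * Real.sin t
            - (β t ^ 2 - deriv β t ^ 2) / 2 * Real.sin t - zbeta β t * Real.cos t) * Real.sin t := by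
    rw [hu0]; simpa using pd_radial hx hF0 0
  have q10 : pd 1 (uc 0 (ubeta β)) x =
      (-β t ^ 2 / 2 * Real.cos t - zbeta β t * Real.sin t) * Real.sin t
        + (-(β t * deriv β t) * Real.cos t + β t ^ 2 / 2 * Real.sin t
            - (β t ^ 2 - deriv β t ^ 2) / 2 * Real.sin t - zbeta β t * Real.cos t) * Real.cos t := by
    rw [hu0]; simpa using pd_radial hx hF0 1
  have q01 : pd 0 (uc 1 (ubeta β)) x =
      (-β t ^ 2 / 2 * Real.sin t + zbeta β t * Real.cos t) * Real.cos t
        - (-(β t * deriv β t) * Real.sin t - β t ^ 2 / 2 * Real.cos t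
            + (β t ^ 2 - deriv β t ^ 2) / 2 * Real.cos t - zbeta β t * Real.sin t) * Real.sin t := by
    rw [hu1]; simpa using pd_radial hx hF1 0
  have q11 : pd 1 (uc 1 (ubeta β)) x =
      (-β t ^ 2 / 2 * Real.sin t + zbeta β t * Real.cos t) * Real.sin t
        + (-(β t * deriv β t) * Real.sin t - β t ^ 2 / 2 * Real.cos t
            + (β t ^ 2 - deriv β t ^ 2) / 2 * Real.cos t - zbeta β t * Real.sin t) * Real.cos t := by
    rw [hu1]; simpa using pd_radial hx hF1 1
  fin_cases i <;> fin_cases j <;>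
    simp only [memb, Fin.isValue, Fin.zero_eta, Fin.mk_one, q00, q01, q10, q11, qv0, qv1] <;>
    ring
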